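/- arXiv:1411.3318 — 4 statements merged into one kernel-verified Lean document; each statement's English description precedes it below -/
import Mathlib

section
/- Let F'/F be a field extension, A an F-algebra, and 0 → X → Y → Z → 0 a short exact sequence of A-modules. The sequence splits over F if and only if the base-changed sequence 0 → X⊗_F F' → Y⊗_F F' → Z⊗_F F' → 0 of A⊗_F F'-modules splits over F'. -/
open scoped TensorProduct

/-- **Splitting of short exact sequences is invariant under base field extension.**
Let `F'/F` be a field extension, `A` an `F`-algebra, and `0 → X → Y → Z → 0` a short exact
sequence of `A`-modules.  The sequence splits over `F` (i.e. the surjection admits an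
`A`-linear section) if and only if the base-changed sequence
`0 → X ⊗_F F' → Y ⊗_F F' → Z ⊗_F F' → 0` of `A ⊗_F F'`-modules splits over `F'`
(i.e. the base-changed surjection admits a section which is `F'`-linear and commutes with the
base-changed `A`-action). -/
theorem ses_splits_iff_baseChange_splits
    (F F' : Type) [Field F] [Field F'] [Algebra F F']
    (A : Type) [Ring A] [Algebra F A]
    (X Y Z : Type)
    [AddCommGroup X] [Module F X] [Module A X] [IsScalarTower F A X] [SMulCommClass F A X]
    [AddCommGroup Y] [Module F Y] [Module A Y] [IsScalarTower F A Y] [SMulCommClass F A Y]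
    [AddCommGroup Z] [Module F Z] [Module A Z] [IsScalarTower F A Z] [SMulCommClass F A Z]
    (f : X →ₗ[A] Y) (g : Y →ₗ[A] Z)
    (hinj : Function.Injective f) (hsurj : Function.Surjective g)
    (hexact : Function.Exact f g) :
    (∃ s : Z →ₗ[A] Y, g.comp s = LinearMap.id) ↔
      (∃ s' : (F' ⊗[F] Z) →ₗ[F'] (F' ⊗[F] Y),
        (∀ (a : A) (v : F' ⊗[F] Z),
          s' (LinearMap.lTensor F' (DistribMulAction.toLinearMap F Z a) v)
            = LinearMap.lTensor F' (DistribMulAction.toLinearMap F Y a) (s' v)) ∧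
        (LinearMap.baseChange F' ((g : Y →ₗ[A] Z).restrictScalars F)).comp s'
          = LinearMap.id) := by

  constructor
  · rintro ⟨s, hs⟩
    refine ⟨LinearMap.baseChange F' (s.restrictScalars F), ?_, ?_⟩
    · intro a v
      induction v using TensorProduct.induction_on with
      | zero => simp
      | tmul c z => simp [LinearMap.map_smul]; exact congrArg _ (s.map_smul a z)
      | add u v hu hv => simp [hu, hv]
    · rw [← LinearMap.baseChange_comp]
      have : ((g : Y →ₗ[A] Z).restrictScalars F).comp (s.restrictScalars F)
          = LinearMap.id := by
        ext z
        exact congrArg (fun (h : Z →ₗ[A] Z) => h z) hs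
      rw [this]
      ext z
      simp
  · rintro ⟨s', hcomm, hs'⟩
    obtain ⟨π, hπ⟩ := (Algebra.linearMap F F').exists_leftInverse_of_injective
      (by rw [LinearMap.ker_eq_bot]; exact (algebraMap F F').injective)
    have hπ1 : π 1 = 1 := by
      have := congrArg (fun (h : F →ₗ[F] F) => h 1) hπ
      simpa using this
    -- the "contraction" maps
    let TY : F' ⊗[F] Y →ₗ[F] Y :=
      (TensorProduct.lid F Y).toLinearMap.comp (LinearMap.rTensor Y π)
    let TZ : F' ⊗[F] Z →ₗ[F] Z :=
      (TensorProduct.lid F Z).toLinearMap.comp (LinearMap.rTensor Z π)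
    have hTY : ∀ (c : F') (y : Y), TY (c ⊗ₜ[F] y) = π c • y := by
      intro c y; simp [TY]
    have hTZ : ∀ (c : F') (z : Z), TZ (c ⊗ₜ[F] z) = π c • z := by
      intro c z; simp [TZ]
    have hTYa : ∀ (a : A) (w : F' ⊗[F] Y),
        TY (LinearMap.lTensor F' (DistribMulAction.toLinearMap F Y a) w) = a • TY w := by
      intro a w
      induction w using TensorProduct.induction_on with
      | zero => simp
      | tmul c y =>
        rw [LinearMap.lTensor_tmul, hTY, hTY]
        exact (smul_comm a (π c) y).symm
      | add u v hu hv => simp [hu, hv]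
    have hg : ∀ (w : F' ⊗[F] Y),
        g (TY w) = TZ (LinearMap.baseChange F' ((g : Y →ₗ[A] Z).restrictScalars F) w) := by
      intro w
      induction w using TensorProduct.induction_on with
      | zero => simp
      | tmul c y => simp [hTY, hTZ]
      | add u v hu hv => simp [hu, hv]
    let s₀ : Z →ₗ[F] Y :=
      TY.comp ((s'.restrictScalars F).comp ((TensorProduct.mk F F' Z) 1))
    have hs₀ : ∀ z : Z, s₀ z = TY (s' ((1 : F') ⊗ₜ[F] z)) := fun z => rfl
    have haz : ∀ (a : A) (z : Z),
        (1 : F') ⊗ₜ[F] (a • z)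
          = LinearMap.lTensor F' (DistribMulAction.toLinearMap F Z a) ((1 : F') ⊗ₜ[F] z) := by
      intro a z; simp; rfl
    refine ⟨{ toFun := s₀, map_add' := s₀.map_add, map_smul' := ?_ }, ?_⟩
    · intro a z
      simp only [RingHom.id_apply]
      rw [hs₀, hs₀, haz, hcomm, hTYa]
    · ext z
      have := congrArg (fun (h : F' ⊗[F] Z →ₗ[F'] F' ⊗[F] Z) => h ((1 : F') ⊗ₜ[F] z)) hs'
      simp only [LinearMap.comp_apply, LinearMap.id_apply] at this
      simp only [LinearMap.comp_apply, LinearMap.id_apply, LinearMap.coe_mk, AddHom.coe_mk]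
      rw [hs₀, hg, this, hTZ, hπ1, one_smul]
end

section
/- Let F'/F be a Galois extension of fields, A an F-algebra, and X' an A⊗_F F'-module with End_{A⊗F'}(X') = F'. If X' admits a model over F (i.e., there exists an A-module X with X ⊗_F F' ≅ X'), then this model is unique up to isomorphism. -/
open scoped TensorProduct

/-- The canonical `F`-linear map `F' ⊗_F M → X'`, `c ⊗ m ↦ c • m`, associated to an
`F`-subspace `M` of an `A ⊗_F F'`-module `X'`.  An `A`-stable subspace `M` is a *model of `X'`
over `F`* precisely when this map is bijective. -/
noncomputable def modelMap (F F' : Type) [Field F] [Field F'] [Algebra F F']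
    (X' : Type) [AddCommGroup X'] [Module F X'] [Module F' X']
    [IsScalarTower F F' X'] [SMulCommClass F F' X']
    (M : Submodule F X') : (F' ⊗[F] ↥M) →ₗ[F] X' :=
  TensorProduct.lift
    (LinearMap.mk₂ F (fun (c : F') (m : ↥M) => c • (m : X'))
      (fun a b m => by simp [add_smul])
      (fun r a m => by simp [smul_assoc])
      (fun a m₁ m₂ => by simp [smul_add])
      (fun r a m => by
        simp only [SetLike.val_smul]
        exact smul_comm a r (m : X')))

theorem fixed_mem_range {F F' : Type} [Field F] [Field F'] [Algebra F F'] [IsGalois F F']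
    {c : F'} (h : ∀ σ : F' ≃ₐ[F] F', σ c = c) : ∃ f : F, algebraMap F F' f = c := by
  classical
  have hint : IsIntegral F c := Algebra.IsIntegral.isIntegral c
  by_contra hno
  have hnr : c ∉ (algebraMap F F').range := by
    rintro ⟨f, rfl⟩; exact hno ⟨f, rfl⟩
  have hdeg : 2 ≤ (minpoly F c).natDegree := (minpoly.two_le_natDegree_iff hint).mpr hnr
  set p := minpoly F c with hp
  set q := p.map (algebraMap F F') with hq
  have hsplit : q.Splits := Normal.splits inferInstance c
  have hq0 : q ≠ 0 := Polynomial.map_ne_zero (minpoly.ne_zero hint)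
  have hcard : Multiset.card q.roots = q.natDegree := by
    rw [← Polynomial.splits_iff_card_roots]
    exact hsplit
  have hqdeg : q.natDegree = p.natDegree := Polynomial.natDegree_map _
  have hnodup : q.roots.Nodup := Polynomial.nodup_roots (Polynomial.Separable.map (Algebra.IsSeparable.isSeparable F c))
  have h2 : 1 < q.roots.toFinset.card := by
    rw [Multiset.toFinset_card_of_nodup hnodup, hcard, hqdeg]
    omega
  obtain ⟨y, hy, hyne⟩ := Finset.exists_mem_ne h2 c
  have hyroot : Polynomial.aeval y p = 0 := by
    have := Multiset.mem_toFinset.mp hy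
    rw [Polynomial.mem_roots hq0] at this
    rwa [Polynomial.aeval_def, ← Polynomial.eval_map]
  have hirr : Irreducible p := minpoly.irreducible hint
  have hmon : p.Monic := minpoly.monic hint
  have hmin : minpoly F y = p := (minpoly.eq_of_irreducible_of_monic hirr hyroot hmon).symm
  have : y ∈ MulAction.orbit (F' ≃ₐ[F] F') c := by
    rw [← Normal.minpoly_eq_iff_mem_orbit]
    rw [hmin]
  obtain ⟨σ, hσ⟩ := this
  exact hyne (by rw [← hσ]; exact h σ)

section Aux

variable {F F' : Type} [Field F] [Field F'] [Algebra F F']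
variable {X' : Type} [AddCommGroup X'] [Module F X'] [Module F' X']
  [IsScalarTower F F' X'] [SMulCommClass F F' X']

theorem modelMap_tmul (M : Submodule F X') (c : F') (m : ↥M) :
    modelMap F F' X' M (c ⊗ₜ m) = c • (m : X') := rfl

theorem modelMap_smul (M : Submodule F X') (c : F') (t : F' ⊗[F] ↥M) :
    modelMap F F' X' M (c • t) = c • modelMap F F' X' M t := by
  induction t using TensorProduct.induction_on with
  | zero => simp
  | tmul d m =>
      rw [TensorProduct.smul_tmul', modelMap_tmul, modelMap_tmul, smul_eq_mul, mul_smul]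
  | add t1 t2 h1 h2 => rw [smul_add, map_add, map_add, h1, h2, smul_add]

/-- The conjugated (semilinear) Galois action on `X'` induced by the model `M`. -/
noncomputable def galAct (M : Submodule F X') (hM : Function.Bijective (modelMap F F' X' M))
    (σ : F' ≃ₐ[F] F') : X' ≃ₗ[F] X' :=
  ((LinearEquiv.ofBijective _ hM).symm.trans
    (TensorProduct.congr σ.toLinearEquiv (LinearEquiv.refl F ↥M))).trans
    (LinearEquiv.ofBijective _ hM)

theorem galAct_modelMap (M : Submodule F X') (hM : Function.Bijective (modelMap F F' X' M))
    (σ : F' ≃ₐ[F] F') (t : F' ⊗[F] ↥M) :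
    galAct M hM σ (modelMap F F' X' M t) =
      modelMap F F' X' M (TensorProduct.congr σ.toLinearEquiv (LinearEquiv.refl F ↥M) t) := by
  have h1 : modelMap F F' X' M t = (LinearEquiv.ofBijective _ hM) t := rfl
  have h2 : ∀ s, modelMap F F' X' M s = (LinearEquiv.ofBijective _ hM) s := fun _ => rfl
  rw [galAct, h1, h2]
  simp only [LinearEquiv.trans_apply, LinearEquiv.symm_apply_apply]

theorem galAct_smul_coe (M : Submodule F X') (hM : Function.Bijective (modelMap F F' X' M))
    (σ : F' ≃ₐ[F] F') (c : F') (m : ↥M) :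
    galAct M hM σ (c • (m : X')) = σ c • (m : X') := by
  rw [← modelMap_tmul, galAct_modelMap, TensorProduct.congr_tmul]
  rfl

theorem galAct_coe (M : Submodule F X') (hM : Function.Bijective (modelMap F F' X' M))
    (σ : F' ≃ₐ[F] F') (m : ↥M) :
    galAct M hM σ (m : X') = (m : X') := by
  have := galAct_smul_coe M hM σ 1 m
  simpa using this

theorem galAct_inv (M : Submodule F X') (hM : Function.Bijective (modelMap F F' X' M))
    (σ : F' ≃ₐ[F] F') (x : X') :
    galAct M hM σ (galAct M hM σ.symm x) = x := by
  obtain ⟨t, rfl⟩ := hM.2 x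
  rw [galAct_modelMap, galAct_modelMap]
  congr 1
  induction t using TensorProduct.induction_on with
  | zero => simp
  | tmul c m => rw [TensorProduct.congr_tmul, TensorProduct.congr_tmul]; simp
  | add t1 t2 h1 h2 => rw [map_add, map_add, h1, h2]

theorem galAct_smul (M : Submodule F X') (hM : Function.Bijective (modelMap F F' X' M))
    (σ : F' ≃ₐ[F] F') (d : F') (x : X') :
    galAct M hM σ (d • x) = σ d • galAct M hM σ x := by
  obtain ⟨t, rfl⟩ := hM.2 x
  rw [← modelMap_smul, galAct_modelMap, galAct_modelMap, ← modelMap_smul]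
  congr 1
  induction t using TensorProduct.induction_on with
  | zero => simp
  | tmul c m =>
      rw [TensorProduct.smul_tmul', TensorProduct.congr_tmul, TensorProduct.congr_tmul,
        TensorProduct.smul_tmul']
      simp [smul_eq_mul, map_mul]
  | add t1 t2 h1 h2 => simp [smul_add, map_add, h1, h2]

theorem galAct_Asmul {A : Type} [Ring A] [Algebra F A] [Module A X']
    [IsScalarTower F A X'] [SMulCommClass A F' X']
    (M : Submodule F X') (hstab : ∀ (a : A), ∀ x ∈ M, a • x ∈ M)
    (hM : Function.Bijective (modelMap F F' X' M))
    (σ : F' ≃ₐ[F] F') (a : A) (x : X') :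
    galAct M hM σ (a • x) = a • galAct M hM σ x := by
  obtain ⟨t, rfl⟩ := hM.2 x
  induction t using TensorProduct.induction_on with
  | zero => simp
  | tmul c m =>
      rw [modelMap_tmul]
      have h1 : a • (c • (m : X')) = c • (a • (m : X')) := smul_comm a c _
      have h2 : (a • (m : X')) = ((⟨a • (m : X'), hstab a m m.2⟩ : ↥M) : X') := rfl
      rw [h1, h2, galAct_smul_coe, galAct_smul_coe]
      exact (smul_comm a (σ c) _).symm
  | add t1 t2 h1 h2 => rw [map_add, smul_add, map_add, h1, h2, map_add, smul_add]

theorem repr_congr {ι : Type} (M : Submodule F X') (b : Module.Basis ι F ↥M)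
    (σ : F' ≃ₐ[F] F') (s : F' ⊗[F] ↥M) (i : ι) :
    (b.baseChange F').repr (TensorProduct.congr σ.toLinearEquiv (LinearEquiv.refl F ↥M) s) i =
      σ ((b.baseChange F').repr s i) := by
  induction s using TensorProduct.induction_on with
  | zero => simp
  | tmul c m =>
      rw [TensorProduct.congr_tmul]
      simp only [LinearEquiv.refl_apply, AlgEquiv.toLinearEquiv_apply,
        Module.Basis.baseChange_repr_tmul]
      rw [Algebra.smul_def, Algebra.smul_def, map_mul, AlgEquiv.commutes]
  | add s1 s2 h1 h2 => simp only [map_add, Finsupp.add_apply, h1, h2]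

theorem mem_of_galAct_fixed [IsGalois F F'] (M : Submodule F X')
    (hM : Function.Bijective (modelMap F F' X' M)) (x : X')
    (h : ∀ σ : F' ≃ₐ[F] F', galAct M hM σ x = x) : x ∈ M := by
  obtain ⟨t, rfl⟩ := hM.2 x
  set b := Module.Basis.ofVectorSpace F ↥M with hb
  set B := b.baseChange F' with hB
  have hfix : ∀ σ : F' ≃ₐ[F] F',
      TensorProduct.congr σ.toLinearEquiv (LinearEquiv.refl F ↥M) t = t := by
    intro σ
    have := h σ
    rw [galAct_modelMap] at this
    exact hM.1 this
  have hcoord : ∀ i, ∃ f : F, algebraMap F F' f = B.repr t i := by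
    intro i
    apply fixed_mem_range
    intro σ
    rw [← repr_congr M b σ t i, hfix σ]
  have htot := B.linearCombination_repr t
  rw [← htot, Finsupp.linearCombination_apply, map_finsuppSum]
  apply Submodule.sum_mem
  intro i _
  obtain ⟨f, hf⟩ := hcoord i
  show modelMap F F' X' M ((B.repr t) i • B i) ∈ M
  rw [modelMap_smul, ← hf, algebraMap_smul]
  apply Submodule.smul_mem
  have : B i = (1 : F') ⊗ₜ[F] (b i) := Module.Basis.baseChange_apply F' b i
  rw [this, modelMap_tmul, one_smul]
  exact (b i).2

end Aux

set_option maxHeartbeats 1000000 in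
/-- **Uniqueness of models (Hilbert 90).**  Let `F'/F` be a Galois extension of fields, `A` an
`F`-algebra, and `X'` an `A ⊗_F F'`-module (encoded via commuting `A`- and `F'`-actions)
satisfying the Schur condition `End_{A ⊗_F F'}(X') = F'`.  If `X'` admits a model over `F`,
then this model is unique up to `A`-linear isomorphism. -/
theorem model_unique_of_schur
    (F F' : Type) [Field F] [Field F'] [Algebra F F'] [IsGalois F F']
    (A : Type) [Ring A] [Algebra F A]
    (X' : Type) [AddCommGroup X'] [Module F X'] [Module F' X'] [Module A X']
    [IsScalarTower F F' X'] [IsScalarTower F A X'] [SMulCommClass A F' X']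
    [SMulCommClass F F' X']
    (hschur : ∀ f : X' →ₗ[F'] X',
      (∀ (a : A) (x : X'), f (a • x) = a • f x) → ∃ c : F', f = c • LinearMap.id)
    (M₁ M₂ : Submodule F X')
    (hM₁stab : ∀ (a : A), ∀ x ∈ M₁, a • x ∈ M₁)
    (hM₁ : Function.Bijective (modelMap F F' X' M₁))
    (hM₂stab : ∀ (a : A), ∀ x ∈ M₂, a • x ∈ M₂)
    (hM₂ : Function.Bijective (modelMap F F' X' M₂)) :
    ∃ e : ↥M₁ ≃ₗ[F] ↥M₂, ∀ (a : A) (y : ↥M₁),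
      ((e ⟨a • (y : X'), hM₁stab a y y.2⟩ : ↥M₂) : X') = a • ((e y : ↥M₂) : X') := by
  by_cases hX : Subsingleton X'
  · exact ⟨LinearEquiv.ofLinear 0 0 (LinearMap.ext fun x => Subsingleton.elim _ _)
      (LinearMap.ext fun x => Subsingleton.elim _ _),
      fun a y => Subsingleton.elim _ _⟩
  have : Nontrivial X' := not_subsingleton_iff_nontrivial.mp hX
  -- a nonzero element of M₁
  have hM₁ne : ∃ m : ↥M₁, (m : X') ≠ 0 := by
    by_contra hno
    push_neg at hno
    obtain ⟨x, hx⟩ := exists_ne (0 : X')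
    obtain ⟨t, ht⟩ := hM₁.2 x
    apply hx
    rw [← ht]
    clear ht
    induction t using TensorProduct.induction_on with
    | zero => simp
    | tmul c m => rw [modelMap_tmul, hno m, smul_zero]
    | add t1 t2 h1 h2 => rw [map_add, h1, h2, add_zero]
  obtain ⟨m₀, hm₀⟩ := hM₁ne
  -- the comparison endomorphisms and the cocycle
  let f : (F' ≃ₐ[F] F') → (X' →ₗ[F'] X') := fun σ =>
    { toFun := fun x => galAct M₂ hM₂ σ (galAct M₁ hM₁ σ.symm x)
      map_add' := by intro x y; simp
      map_smul' := by
        intro d x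
        simp only [RingHom.id_apply]
        rw [galAct_smul, galAct_smul, AlgEquiv.apply_symm_apply] }
  have hfA : ∀ σ (a : A) (x : X'), f σ (a • x) = a • f σ x := by
    intro σ a x
    show galAct M₂ hM₂ σ (galAct M₁ hM₁ σ.symm (a • x)) =
      a • galAct M₂ hM₂ σ (galAct M₁ hM₁ σ.symm x)
    rw [galAct_Asmul M₁ hM₁stab, galAct_Asmul M₂ hM₂stab]
  choose cc hcc using fun σ => hschur (f σ) (hfA σ)
  have key2 : ∀ σ (x : X'), galAct M₂ hM₂ σ (galAct M₁ hM₁ σ.symm x) = cc σ • x := by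
    intro σ x
    have := LinearMap.congr_fun (hcc σ) x
    simpa [f] using this
  have key1 : ∀ σ (m : ↥M₁), galAct M₂ hM₂ σ (m : X') = cc σ • (m : X') := by
    intro σ m
    have := key2 σ (m : X')
    rwa [galAct_coe] at this
  -- coordinates of m₀ with respect to a basis of M₂
  set b := Module.Basis.ofVectorSpace F ↥M₂ with hb
  set B := b.baseChange F' with hB
  set t₀ := (LinearEquiv.ofBijective _ hM₂).symm ((m₀ : X') : X') with ht₀def
  have ht₀ : modelMap F F' X' M₂ t₀ = (m₀ : X') := by
    show (LinearEquiv.ofBijective _ hM₂) t₀ = (m₀ : X')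
    rw [ht₀def, LinearEquiv.apply_symm_apply]
  have ht₀ne : t₀ ≠ 0 := by
    intro h0
    apply hm₀
    rw [← ht₀, h0, map_zero]
  have hex : ∃ i, B.repr t₀ i ≠ 0 := by
    by_contra hall
    push_neg at hall
    apply ht₀ne
    have : B.repr t₀ = 0 := Finsupp.ext fun i => hall i
    have h2 := B.linearCombination_repr t₀
    rw [this, map_zero] at h2
    exact h2.symm
  obtain ⟨i₀, hi₀⟩ := hex
  set c := B.repr t₀ i₀ with hcdef
  have hcc_eq : ∀ σ, cc σ = σ c * c⁻¹ := by
    intro σ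
    have h1 := key1 σ m₀
    rw [← ht₀, galAct_modelMap, ← modelMap_smul] at h1
    have h2 : TensorProduct.congr σ.toLinearEquiv (LinearEquiv.refl F ↥M₂) t₀ = cc σ • t₀ :=
      hM₂.1 h1
    have h3 := repr_congr M₂ b σ t₀ i₀
    rw [h2, map_smul] at h3
    have h4 : cc σ * c = σ c := by
      rw [Finsupp.smul_apply, smul_eq_mul] at h3
      exact h3
    rw [← h4]
    field_simp
  have hccne : ∀ σ, cc σ ≠ 0 := by
    intro σ
    rw [hcc_eq σ]
    exact mul_ne_zero (by simpa using hi₀) (inv_ne_zero hi₀)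
  -- c⁻¹ • M₁ ⊆ M₂
  have h1 : ∀ m : ↥M₁, c⁻¹ • (m : X') ∈ M₂ := by
    intro m
    apply mem_of_galAct_fixed M₂ hM₂
    intro σ
    rw [galAct_smul, key1 σ m, hcc_eq σ, map_inv₀, smul_smul]
    congr 1
    have hσc : σ c ≠ 0 := by simpa using hi₀
    field_simp
  -- the inverse action on M₂
  have hgal1 : ∀ σ (n : ↥M₂), galAct M₁ hM₁ σ (n : X') = (cc σ)⁻¹ • (n : X') := by
    intro σ n
    have h2 := key2 σ (galAct M₁ hM₁ σ (n : X'))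
    have h3 : galAct M₁ hM₁ σ.symm (galAct M₁ hM₁ σ (n : X')) = (n : X') := by
      have := galAct_inv M₁ hM₁ σ.symm (n : X')
      rwa [AlgEquiv.symm_symm] at this
    rw [h3, galAct_coe] at h2
    conv_rhs => rw [h2]
    rw [smul_smul, inv_mul_cancel₀ (hccne σ), one_smul]
  have h2 : ∀ n : ↥M₂, c • (n : X') ∈ M₁ := by
    intro n
    apply mem_of_galAct_fixed M₁ hM₁
    intro σ
    rw [galAct_smul, hgal1 σ n, hcc_eq σ, smul_smul]
    congr 1
    have hσc : σ c ≠ 0 := by simpa using hi₀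
    field_simp
  refine ⟨{ toFun := fun m => ⟨c⁻¹ • (m : X'), h1 m⟩
            map_add' := fun x y => Subtype.ext (by simp [smul_add])
            map_smul' := fun r x => Subtype.ext (by
              simp only [SetLike.val_smul, RingHom.id_apply]
              exact smul_comm _ _ _)
            invFun := fun n => ⟨c • (n : X'), h2 n⟩
            left_inv := fun m => Subtype.ext (by
              simp only
              rw [smul_smul, mul_inv_cancel₀ hi₀, one_smul])
            right_inv := fun n => Subtype.ext (by
              simp only
              rw [smul_smul, inv_mul_cancel₀ hi₀, one_smul]) }, ?_⟩
  intro a y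
  show c⁻¹ • (a • (y : X')) = a • (c⁻¹ • (y : X'))
  exact (smul_comm a c⁻¹ _).symm
end

section
/- Let F'/F be a finite Galois extension of fields of degree n, A an F-algebra, and X' a simple A⊗_F F'-module. Then the restriction of scalars of X' to F, viewed as an A-module, decomposes as a finite direct sum of simple A-modules, the number of summands being at most n = [F':F]. -/
open scoped TensorProduct

/-! ### Auxiliary lattice lemmas -/

section LatticeAux

variable {α : Type*} [CompleteLattice α]

private lemma biSup_ne_zero {m : ℕ} (f : Fin (m + 1) → α) :
    (⨆ j, ⨆ (_ : j ≠ 0), f j) = ⨆ i, f (Fin.succ i) := by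
  apply le_antisymm
  · refine iSup₂_le fun j hj => ?_
    obtain ⟨i, rfl⟩ := Fin.eq_succ_of_ne_zero hj
    exact le_iSup (fun i => f (Fin.succ i)) i
  · exact iSup_le fun i => le_iSup₂_of_le i.succ (Fin.succ_ne_zero i) le_rfl

private lemma biSup_ne_succ {m : ℕ} (f : Fin (m + 1) → α) (i : Fin m) :
    (⨆ j, ⨆ (_ : j ≠ Fin.succ i), f j) = f 0 ⊔ ⨆ k, ⨆ (_ : k ≠ i), f (Fin.succ k) := by
  apply le_antisymm
  · refine iSup₂_le fun j hj => ?_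
    rcases Fin.eq_zero_or_eq_succ j with rfl | ⟨k, rfl⟩
    · exact le_sup_left
    · have hk : k ≠ i := fun h => hj (by rw [h])
      exact le_sup_of_le_right (le_iSup₂_of_le k hk le_rfl)
  · refine sup_le (le_iSup₂_of_le 0 (Ne.symm (Fin.succ_ne_zero i)) le_rfl) ?_
    exact iSup₂_le fun k hk =>
      le_iSup₂_of_le k.succ (fun h => hk (Fin.succ_injective _ h)) le_rfl

private lemma cons_iSup {m : ℕ} (L : α) (Y : Fin m → α) :
    (⨆ j, Fin.cons L Y j) = L ⊔ ⨆ i, Y i := by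
  apply le_antisymm
  · refine iSup_le fun j => ?_
    rcases Fin.eq_zero_or_eq_succ j with rfl | ⟨k, rfl⟩
    · simp
    · simp only [Fin.cons_succ]
      exact le_sup_of_le_right (le_iSup Y k)
  · refine sup_le (le_iSup_of_le 0 (by simp)) (iSup_le fun i => le_iSup_of_le i.succ (by simp))

private lemma iSupIndep_fin_cons [IsModularLattice α] {m : ℕ} {L : α} {Y : Fin m → α}
    (hY : iSupIndep Y) (hL : Disjoint L (⨆ i, Y i)) : iSupIndep (Fin.cons L Y) := by
  intro j
  rcases Fin.eq_zero_or_eq_succ j with rfl | ⟨i, rfl⟩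
  · rw [Fin.cons_zero, biSup_ne_zero]
    simpa only [Fin.cons_succ] using hL
  · rw [Fin.cons_succ, biSup_ne_succ, Fin.cons_zero]
    simp only [Fin.cons_succ]
    -- goal : Disjoint (Y i) (L ⊔ ⨆ k ≠ i, Y k)
    set b := ⨆ k, ⨆ (_ : k ≠ i), Y k with hbdef
    have hb' : Y i ⊓ b = ⊥ := disjoint_iff.mp (hY i)
    have hba : b ⊔ Y i ≤ ⨆ k, Y k :=
      sup_le (iSup₂_le fun k _ => le_iSup Y k) (le_iSup Y i)
    have hc' : L ⊓ (b ⊔ Y i) = ⊥ := disjoint_iff.mp (hL.mono_right hba)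
    rw [disjoint_iff]
    have h1 : (b ⊔ L) ⊓ (b ⊔ Y i) = b := by
      rw [sup_inf_assoc_of_le L le_sup_left, hc', sup_bot_eq]
    refine le_bot_iff.mp ?_
    have h3 : Y i ⊓ (L ⊔ b) ≤ Y i ⊓ ((b ⊔ L) ⊓ (b ⊔ Y i)) :=
      le_inf inf_le_left
        (le_inf (inf_le_right.trans (sup_comm L b).le) (inf_le_left.trans le_sup_right))
    rw [h1] at h3
    exact h3.trans_eq hb'

end LatticeAux

/-- Greedy extraction of an independent subfamily of a finite family of simple submodules,
with the same supremum. -/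
private lemma exists_independent_subfamily {R M : Type*} [Ring R] [AddCommGroup M] [Module R M] :
    ∀ (k : ℕ) (S : Fin k → Submodule R M), (∀ i, IsSimpleModule R ↥(S i)) →
      ∃ (m : ℕ) (Y : Fin m → Submodule R M), m ≤ k ∧ (∀ i, IsSimpleModule R ↥(Y i)) ∧
        iSupIndep Y ∧ iSup Y = iSup S := by
  intro k
  induction k with
  | zero =>
    intro S _
    refine ⟨0, Fin.elim0, le_refl 0, fun i => i.elim0, fun i => i.elim0, ?_⟩
    exact (iSup_of_empty _).trans (iSup_of_empty _).symm
  | succ k IH =>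
    intro S hS
    obtain ⟨m, Y, hm, hsimp, hind, hsup⟩ := IH (fun i => S i.succ) (fun i => hS i.succ)
    have htot : iSup S = S 0 ⊔ ⨆ i, S (Fin.succ i) := by
      have : S = Fin.cons (S 0) (fun i => S i.succ) := by
        funext j
        rcases Fin.eq_zero_or_eq_succ j with rfl | ⟨i, rfl⟩ <;> simp
      conv_lhs => rw [this]
      exact cons_iSup _ _
    by_cases hle : S 0 ≤ iSup Y
    · refine ⟨m, Y, hm.trans (Nat.le_succ k), hsimp, hind, ?_⟩
      rw [htot, ← hsup, sup_eq_right.mpr hle]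
    · have hdisj : Disjoint (S 0) (iSup Y) := by
        have hato : IsAtom (S 0) := isSimpleModule_iff_isAtom.mp (hS 0)
        rw [disjoint_iff]
        rcases (lt_or_eq_of_le (inf_le_left : S 0 ⊓ iSup Y ≤ S 0)) with hlt | heq
        · exact hato.2 _ hlt
        · exact absurd (heq ▸ inf_le_right) hle
      refine ⟨m + 1, Fin.cons (S 0) Y, Nat.succ_le_succ hm, ?_,
        iSupIndep_fin_cons hind hdisj, ?_⟩
      · intro i
        rcases Fin.eq_zero_or_eq_succ i with rfl | ⟨j, rfl⟩
        · exact hS 0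
        · exact hsimp j
      · rw [cons_iSup, hsup, htot]

/-! ### Twisted copies of `X'` -/

section Aux

variable (F F' : Type) [Field F] [Field F'] [Algebra F F']
variable (A : Type) [Ring A] [Algebra F A]
variable (X' : Type) [AddCommGroup X'] [Module F X'] [Module F' X'] [Module A X']
variable [IsScalarTower F F' X'] [IsScalarTower F A X'] [SMulCommClass A F' X']

/-- The copy of `X'` whose `F'`-action is twisted by the automorphism `σ`. -/
def TwX (σ : F' ≃ₐ[F] F') : Type := X'

namespace TwX

variable (σ : F' ≃ₐ[F] F')

/-- Identity map into the twisted copy. -/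
def mk (x : X') : TwX F F' X' σ := x

/-- Identity map out of the twisted copy. -/
def un (x : TwX F F' X' σ) : X' := x

instance : AddCommGroup (TwX F F' X' σ) := inferInstanceAs (AddCommGroup X')

instance : Module F (TwX F F' X' σ) := inferInstanceAs (Module F X')

instance : Module A (TwX F F' X' σ) := inferInstanceAs (Module A X')

instance : IsScalarTower F A (TwX F F' X' σ) := inferInstanceAs (IsScalarTower F A X')

noncomputable instance : Module F' (TwX F F' X' σ) :=
  Module.compHom X' (σ.toRingEquiv.toRingHom)

lemma un_add (x y : TwX F F' X' σ) : un F F' X' σ (x + y) = un F F' X' σ x + un F F' X' σ y := rfl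

lemma un_zero : un F F' X' σ 0 = 0 := rfl

lemma un_smul (c : F') (x : TwX F F' X' σ) :
    un F F' X' σ (c • x) = σ c • un F F' X' σ x := rfl

lemma un_asmul (a : A) (x : TwX F F' X' σ) :
    un F F' X' σ (a • x) = a • un F F' X' σ x := rfl

lemma un_mk (x : X') : un F F' X' σ (mk F F' X' σ x) = x := rfl

lemma un_injective : Function.Injective (un F F' X' σ) := fun _ _ h => h

instance : IsScalarTower F F' (TwX F F' X' σ) := by
  constructor
  intro f c x
  have : σ (f • c) • un F F' X' σ x = f • (σ c • un F F' X' σ x) := by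
    rw [map_smul, smul_assoc]
  exact this

instance : SMulCommClass A F' (TwX F F' X' σ) := by
  constructor
  intro a c x
  have : a • (σ c • un F F' X' σ x) = σ c • (a • un F F' X' σ x) := smul_comm a (σ c) _
  exact this

noncomputable instance : Module (A ⊗[F] F') (TwX F F' X' σ) := TensorProduct.Algebra.module

lemma un_tsmul (a : A) (d : F') (x : TwX F F' X' σ) :
    un F F' X' σ ((a ⊗ₜ[F] d) • x) = a • (σ d • un F F' X' σ x) := rfl

end TwX

variable {F F' A X'} in
/-- A submodule of a twisted copy over `A ⊗[F] F'`, viewed as an `A`-submodule of `X'`. -/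
private def untwSubmodule (σ : F' ≃ₐ[F] F')
    (P : Submodule (A ⊗[F] F') (TwX F F' X' σ)) : Submodule A X' where
  carrier := TwX.un F F' X' σ '' P.carrier
  add_mem' := by
    rintro x y ⟨u, hu, rfl⟩ ⟨v, hv, rfl⟩
    exact ⟨u + v, P.add_mem hu hv, rfl⟩
  zero_mem' := ⟨0, P.zero_mem, rfl⟩
  smul_mem' := by
    rintro a x ⟨u, hu, rfl⟩
    refine ⟨((a : A) ⊗ₜ[F] (1 : F')) • u, P.smul_mem _ hu, ?_⟩
    rw [TwX.un_tsmul, map_one, one_smul]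

variable {F F' A X'} in
private theorem twX_isSimpleModule (hnt : Nontrivial X')
    (hsimple : ∀ p : Submodule A X',
      (∀ (c : F'), ∀ x ∈ p, c • x ∈ p) → p = ⊥ ∨ p = ⊤)
    (σ : F' ≃ₐ[F] F') : IsSimpleModule (A ⊗[F] F') (TwX F F' X' σ) := by
  have hbt : (⊥ : Submodule (A ⊗[F] F') (TwX F F' X' σ)) ≠ ⊤ := by
    intro h
    obtain ⟨x, y, hxy⟩ := hnt
    apply hxy
    have hx : TwX.mk F F' X' σ x ∈ (⊥ : Submodule (A ⊗[F] F') (TwX F F' X' σ)) := by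
      rw [h]; trivial
    have hy : TwX.mk F F' X' σ y ∈ (⊥ : Submodule (A ⊗[F] F') (TwX F F' X' σ)) := by
      rw [h]; trivial
    rw [Submodule.mem_bot] at hx hy
    calc x = TwX.un F F' X' σ (TwX.mk F F' X' σ x) := rfl
    _ = 0 := by rw [hx, TwX.un_zero]
    _ = TwX.un F F' X' σ (TwX.mk F F' X' σ y) := by rw [hy, TwX.un_zero]
    _ = y := rfl
  haveI : Nontrivial (Submodule (A ⊗[F] F') (TwX F F' X' σ)) := ⟨⊥, ⊤, hbt⟩
  refine { eq_bot_or_eq_top := fun P => ?_ }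
  have hstab : ∀ (c : F'), ∀ x ∈ untwSubmodule σ P, c • x ∈ untwSubmodule σ P := by
    rintro c x ⟨u, hu, rfl⟩
    refine ⟨((1 : A) ⊗ₜ[F] (σ.symm c)) • u, P.smul_mem _ hu, ?_⟩
    rw [TwX.un_tsmul, one_smul, AlgEquiv.apply_symm_apply]
  rcases hsimple (untwSubmodule σ P) hstab with h | h
  · left
    ext u
    simp only [Submodule.mem_bot]
    constructor
    · intro hu
      have : TwX.un F F' X' σ u ∈ untwSubmodule σ P := ⟨u, hu, rfl⟩
      rw [h, Submodule.mem_bot] at this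
      exact TwX.un_injective F F' X' σ this
    · rintro rfl; exact P.zero_mem
  · right
    ext u
    simp only [Submodule.mem_top, iff_true]
    have : TwX.un F F' X' σ u ∈ untwSubmodule σ P := by rw [h]; trivial
    obtain ⟨v, hv, hvu⟩ := this
    have : v = u := TwX.un_injective F F' X' σ hvu
    rwa [this] at hv

variable [FiniteDimensional F F'] [IsGalois F F']

variable {F F' A X'} in
/-- The key order-embedding sending an `A`-submodule `p` of `X'` to an
`A ⊗[F] F'`-submodule of `∀ σ, TwX σ`. -/
private noncomputable def psiSub (p : Submodule A X') :
    Submodule (A ⊗[F] F') (∀ σ : F' ≃ₐ[F] F', TwX F F' X' σ) where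
  carrier := {w | ∀ c : F', (∑ σ : F' ≃ₐ[F] F', TwX.un F F' X' σ (c • w σ)) ∈ p}
  add_mem' := by
    intro w v hw hv c
    have : ∀ σ : F' ≃ₐ[F] F', TwX.un F F' X' σ (c • (w + v) σ)
        = TwX.un F F' X' σ (c • w σ) + TwX.un F F' X' σ (c • v σ) := by
      intro σ
      show TwX.un F F' X' σ (c • (w σ + v σ)) = _
      rw [smul_add, TwX.un_add]
    rw [Finset.sum_congr rfl (fun σ _ => this σ), Finset.sum_add_distrib]
    exact p.add_mem (hw c) (hv c)
  zero_mem' := by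
    intro c
    have : ∀ σ : F' ≃ₐ[F] F', TwX.un F F' X' σ (c • (0 : ∀ σ, TwX F F' X' σ) σ) = 0 := by
      intro σ
      show TwX.un F F' X' σ (c • (0 : TwX F F' X' σ)) = 0
      rw [smul_zero, TwX.un_zero]
    rw [Finset.sum_congr rfl (fun σ _ => this σ), Finset.sum_const_zero]
    exact p.zero_mem
  smul_mem' := by
    intro r w hw
    induction r using TensorProduct.induction_on with
    | zero =>
      intro c
      have : ∀ σ : F' ≃ₐ[F] F', TwX.un F F' X' σ (c • ((0 : A ⊗[F] F') • w) σ) = 0 := by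
        intro σ
        show TwX.un F F' X' σ (c • ((0 : A ⊗[F] F') • w σ)) = 0
        rw [zero_smul, smul_zero, TwX.un_zero]
      rw [Finset.sum_congr rfl (fun σ _ => this σ), Finset.sum_const_zero]
      exact p.zero_mem
    | tmul a d =>
      intro c
      have : ∀ σ : F' ≃ₐ[F] F', TwX.un F F' X' σ (c • ((a ⊗ₜ[F] d) • w) σ)
          = a • TwX.un F F' X' σ ((c * d) • w σ) := by
        intro σ
        show TwX.un F F' X' σ (c • ((a ⊗ₜ[F] d) • w σ)) = _
        rw [TwX.un_smul, TwX.un_tsmul, TwX.un_smul, map_mul]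
        rw [← smul_comm a (σ c), mul_smul]
      rw [Finset.sum_congr rfl (fun σ _ => this σ), ← Finset.smul_sum]
      exact p.smul_mem a (hw (c * d))
    | add r s hr hs =>
      intro c
      have : ∀ σ : F' ≃ₐ[F] F', TwX.un F F' X' σ (c • ((r + s) • w) σ)
          = TwX.un F F' X' σ (c • (r • w) σ) + TwX.un F F' X' σ (c • (s • w) σ) := by
        intro σ
        show TwX.un F F' X' σ (c • ((r + s) • w σ)) = TwX.un F F' X' σ (c • (r • w σ))
          + TwX.un F F' X' σ (c • (s • w σ))
        rw [add_smul, smul_add, TwX.un_add]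
      rw [Finset.sum_congr rfl (fun σ _ => this σ), Finset.sum_add_distrib]
      exact p.add_mem (hr c) (hs c)

variable {F F' A X'} in
private theorem psiSub_strictMono {p q : Submodule A X'} (h : p < q) :
    psiSub (F := F) (F' := F') p < psiSub (F := F) (F' := F') q := by
  obtain ⟨x, hxq, hxp⟩ := SetLike.exists_of_lt h
  -- the diagonal element
  set Δ : ∀ σ : F' ≃ₐ[F] F', TwX F F' X' σ := fun σ => TwX.mk F F' X' σ x with hΔ
  have hkey : ∀ (c : F') (y : X'),
      (∑ σ : F' ≃ₐ[F] F', TwX.un F F' X' σ (c • TwX.mk F F' X' σ y))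
        = algebraMap F A (Algebra.trace F F' c) • y := by
    intro c y
    have h1 : ∀ σ : F' ≃ₐ[F] F',
        TwX.un F F' X' σ (c • TwX.mk F F' X' σ y) = σ c • y := fun σ => rfl
    rw [Finset.sum_congr rfl (fun σ _ => h1 σ), ← Finset.sum_smul,
      ← trace_eq_sum_automorphisms (K := F) (L := F'), algebraMap_smul, algebraMap_smul]
  have hle : psiSub (F := F) (F' := F') p ≤ psiSub (F := F) (F' := F') q := by
    intro w hw c
    exact h.le (hw c)
  refine lt_of_le_of_ne hle ?_
  intro heq
  have hΔq : Δ ∈ psiSub q := by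
    intro c
    rw [hkey c x]
    exact q.smul_mem _ hxq
  rw [← heq] at hΔq
  obtain ⟨c₁, hc₁⟩ := Algebra.trace_surjective F F' 1
  have := hΔq c₁
  rw [hkey c₁ x, hc₁, map_one, one_smul] at this
  exact hxp this

end Aux

private theorem exists_atom_submodule
    {F F' : Type} [Field F] [Field F'] [Algebra F F']
    {A : Type} [Ring A] [Algebra F A]
    {X' : Type} [AddCommGroup X'] [Module F X'] [Module F' X'] [Module A X']
    [IsScalarTower F F' X'] [IsScalarTower F A X'] [SMulCommClass A F' X']
    [FiniteDimensional F F'] [IsGalois F F']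
    (hnt : Nontrivial X')
    (hsimple : ∀ p : Submodule A X',
      (∀ (c : F'), ∀ x ∈ p, c • x ∈ p) → p = ⊥ ∨ p = ⊤) :
    ∃ S : Submodule A X', IsAtom S := by
  haveI : ∀ σ : F' ≃ₐ[F] F', IsSimpleModule (A ⊗[F] F') (TwX F F' X' σ) :=
    twX_isSimpleModule hnt hsimple
  haveI : ∀ σ : F' ≃ₐ[F] F', IsArtinian (A ⊗[F] F') (TwX F F' X' σ) := by
    intro σ
    open scoped IsSimpleOrder in exact ⟨Finite.wellFounded_of_trans_of_irrefl _⟩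
  haveI hart : IsArtinian (A ⊗[F] F') (∀ σ : F' ≃ₐ[F] F', TwX F F' X' σ) := isArtinian_pi
  have hwf : WellFounded ((· < ·) : Submodule A X' → Submodule A X' → Prop) := by
    have htarget : WellFounded
        ((· < ·) : Submodule (A ⊗[F] F') (∀ σ : F' ≃ₐ[F] F', TwX F F' X' σ) → _ → Prop) :=
      IsWellFounded.wf
    exact Subrelation.wf (fun {p q} hpq => psiSub_strictMono hpq)
      (InvImage.wf psiSub htarget)
  haveI : IsAtomic (Submodule A X') := isAtomic_of_orderBot_wellFounded_lt hwf
  have hne : (⊤ : Submodule A X') ≠ ⊥ := by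
    intro h
    obtain ⟨x, y, hxy⟩ := hnt
    apply hxy
    have hx : x ∈ (⊤ : Submodule A X') := trivial
    have hy : y ∈ (⊤ : Submodule A X') := trivial
    rw [h, Submodule.mem_bot] at hx hy
    rw [hx, hy]
  rcases eq_bot_or_exists_atom_le (⊤ : Submodule A X') with h | ⟨S, hS, _⟩
  · exact absurd h hne
  · exact ⟨S, hS⟩

/-- **Restriction of scalars of simple modules along a finite Galois extension.**
Let `F'/F` be a finite Galois extension of degree `n = [F' : F]`, `A` an `F`-algebra and `X'`
a simple `A ⊗_F F'`-module (encoded as a module with commuting `A`- and `F'`-actions: it is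
nontrivial and every `A`-submodule which is also `F'`-stable is trivial).  Then `X'`, viewed
as an `A`-module by restriction of scalars, decomposes as a finite internal direct sum of
simple `A`-modules, the number of summands being at most `n = [F' : F]`. -/
theorem restrictScalars_simple_decomposes
    (F F' : Type) [Field F] [Field F'] [Algebra F F'] [IsGalois F F'] [FiniteDimensional F F']
    (A : Type) [Ring A] [Algebra F A]
    (X' : Type) [AddCommGroup X'] [Module F X'] [Module F' X'] [Module A X']
    [IsScalarTower F F' X'] [IsScalarTower F A X'] [SMulCommClass A F' X']
    (hnt : Nontrivial X')
    (hsimple : ∀ p : Submodule A X',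
      (∀ (c : F'), ∀ x ∈ p, c • x ∈ p) → p = ⊥ ∨ p = ⊤) :
    ∃ (n : ℕ) (Y : Fin n → Submodule A X'),
      n ≤ Module.finrank F F' ∧
      DirectSum.IsInternal Y ∧
      ∀ i, IsSimpleModule A ↥(Y i) := by
  classical
  obtain ⟨S, hS⟩ := exists_atom_submodule (F := F) (F' := F') (A := A) (X' := X') hnt hsimple
  haveI : IsSimpleModule A ↥S := isSimpleModule_iff_isAtom.mpr hS
  set n := Module.finrank F F' with hn
  let b : Module.Basis (Fin n) F F' := Module.finBasis F F'
  -- multiplication by a nonzero scalar of `F'` is an `A`-linear automorphism of `X'`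
  let e : ∀ (c : F'), c ≠ 0 → (X' ≃ₗ[A] X') := fun c hc =>
    { toFun := fun x => c • x
      map_add' := fun x y => smul_add c x y
      map_smul' := fun a x => by simpa using (smul_comm a c x).symm
      invFun := fun x => c⁻¹ • x
      left_inv := fun x => by show c⁻¹ • (c • x) = x; rw [← mul_smul, inv_mul_cancel₀ hc, one_smul]
      right_inv := fun x => by show c • (c⁻¹ • x) = x; rw [← mul_smul, mul_inv_cancel₀ hc, one_smul] }
  let Y0 : Fin n → Submodule A X' := fun i =>
    S.map ((e (b i) (b.ne_zero i)).toLinearMap)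
  have hY0simple : ∀ i, IsSimpleModule A ↥(Y0 i) := by
    intro i
    exact IsSimpleModule.congr
      (Submodule.equivMapOfInjective ((e (b i) (b.ne_zero i)).toLinearMap)
        (e (b i) (b.ne_zero i)).injective S).symm
  -- every `F'`-multiple of an element of `S` lies in the span of the `Y0 i`
  have hmem : ∀ (d : F') (x : X'), x ∈ S → d • x ∈ ⨆ i, Y0 i := by
    intro d x hx
    rw [← Module.Basis.sum_repr b d, Finset.sum_smul]
    refine Submodule.sum_mem _ fun i _ => ?_
    rw [smul_assoc, ← algebraMap_smul A (b.repr d i) ((b i) • x)]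
    refine Submodule.mem_iSup_of_mem i (Submodule.smul_mem _ _ ?_)
    exact ⟨x, hx, rfl⟩
  have hQtop : (⨆ i, Y0 i) = ⊤ := by
    have hstab : ∀ (c : F'), ∀ x ∈ (⨆ i, Y0 i), c • x ∈ (⨆ i, Y0 i) := by
      intro c x hx
      -- use the `A`-linear map given by multiplication by `c`
      let lsm : X' →ₗ[A] X' :=
        { toFun := fun y => c • y
          map_add' := fun y z => smul_add c y z
          map_smul' := fun a y => by simpa using (smul_comm a c y).symm }
      have hmap : Submodule.map lsm (⨆ i, Y0 i) ≤ ⨆ i, Y0 i := by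
        rw [Submodule.map_iSup]
        refine iSup_le fun i => ?_
        rintro y ⟨z, ⟨w, hw, rfl⟩, rfl⟩
        show c • ((b i) • w) ∈ ⨆ i, Y0 i
        rw [← mul_smul]
        exact hmem (c * b i) w hw
      exact hmap ⟨x, hx, rfl⟩
    rcases hsimple (⨆ i, Y0 i) hstab with hbot | htop
    · exfalso
      apply hS.1
      rw [eq_bot_iff]
      intro x hx
      have h1 : (1 : F') • x ∈ ⨆ i, Y0 i := hmem 1 x hx
      rw [one_smul, hbot, Submodule.mem_bot] at h1
      rw [h1]
      exact Submodule.zero_mem ⊥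
    · exact htop
  obtain ⟨m, Y, hm, hsimp, hind, hsup⟩ := exists_independent_subfamily n Y0 hY0simple
  refine ⟨m, Y, hm, ?_, hsimp⟩
  exact DirectSum.isInternal_submodule_of_iSupIndep_of_iSup_eq_top hind (by rw [hsup, hQtop])
end

section
/- Let F'/F be a quadratic extension, A an F-algebra, and X an absolutely irreducible A⊗_F F'-module (so End_{A⊗F'}(X) = F'); assume End of simple modules over A are algebraic division algebras over F. If Y = res_{F'/F} X is an irreducible A-module, then End_A(Y) is an F-algebra of dimension 2 or 4 containing F', and it is 4-dimensional if and only if X is isomorphic to its Galois conjugate X̄ = X ⊗_{F',τ} F' (where τ generates Gal(F'/F)); in the 4-dimensional case End_A(Y) is a quaternion division algebra over F. -/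
open scoped TensorProduct

/-- Absolute irreducibility of an `A ⊗_F F'`-module `X'` (encoded via commuting `A`- and
`F'`-actions): for every field extension `F''/F'` the base change `F'' ⊗_{F'} X'` is simple
under the actions of `F''` and of `A`. -/
def IsAbsIrred (F' : Type) [Field F']
    (A : Type) [Ring A]
    (X' : Type) [AddCommGroup X'] [Module F' X'] [Module A X'] [SMulCommClass A F' X'] :
    Prop :=
  ∀ (F'' : Type) [Field F''] [Algebra F' F''],
    Nontrivial (F'' ⊗[F'] X') ∧
      ∀ p : Submodule F'' (F'' ⊗[F'] X'),
        (∀ (a : A), ∀ v ∈ p,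
          LinearMap.lTensor F'' (DistribMulAction.toLinearMap F' X' a) v ∈ p) →
        p = ⊥ ∨ p = ⊤

set_option linter.unusedSectionVars false

open Polynomial in
theorem key_scalar (F' : Type) [Field F']
    (A : Type) [Ring A]
    (X' : Type) [AddCommGroup X'] [Module F' X'] [Module A X'] [SMulCommClass A F' X']
    (habs : IsAbsIrred F' A X')
    (φ : X' →ₗ[F'] X')
    (hA : ∀ (a : A) (x : X'), φ (a • x) = a • φ x)
    (p : Polynomial F') (hp : p ≠ 0) (hpφ : Polynomial.aeval φ p = 0) :
    ∃ c : F', ∀ x : X', φ x = c • x := by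
  set F'' := p.SplittingField with hF''
  obtain ⟨hnt, hsimp⟩ := habs F''
  set q : Polynomial F'' := p.map (algebraMap F' F'') with hqdef
  have hq0 : q ≠ 0 := Polynomial.map_ne_zero hp
  set Φ : Module.End F'' (F'' ⊗[F'] X') := Module.End.baseChangeHom F' F'' X' φ with hΦdef
  have hΦtmul : ∀ (y : F'') (x : X'), Φ (y ⊗ₜ[F'] x) = y ⊗ₜ[F'] (φ x) := by
    intro y x
    show LinearMap.baseChange F'' φ (y ⊗ₜ[F'] x) = _
    simp [LinearMap.baseChange_tmul]
  have hΦq : aeval Φ q = 0 := by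
    rw [hqdef, aeval_map_algebraMap, aeval_algHom_apply, hpφ, map_zero]
  have hsplit : q.Splits :=
    Polynomial.SplittingField.splits p
  have hexists : ∃ μ ∈ q.roots, LinearMap.ker (Φ - algebraMap F'' _ μ) ≠ ⊥ := by
    by_contra hcon
    push_neg at hcon
    have hinj : ∀ (s : Multiset F''), (∀ μ ∈ s, LinearMap.ker (Φ - algebraMap F'' _ μ) = ⊥) →
        Function.Injective (aeval Φ ((s.map (fun a => X - C a)).prod)) := by
      intro s
      induction s using Multiset.induction_on with
      | empty => intro _; simp only [Multiset.map_zero, Multiset.prod_zero, map_one,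
          Module.End.one_apply]; exact fun a b h => h
      | cons a s ih =>
        intro h
        rw [Multiset.map_cons, Multiset.prod_cons, map_mul]
        have h1 : Function.Injective (aeval Φ (X - C a)) := by
          rw [← LinearMap.ker_eq_bot]
          have := h a (Multiset.mem_cons_self a s)
          simpa [map_sub, aeval_X, aeval_C] using this
        have h2 := ih (fun μ hμ => h μ (Multiset.mem_cons_of_mem hμ))
        intro u v huv
        rw [Module.End.mul_apply, Module.End.mul_apply] at huv
        exact h2 (h1 huv)
    have hPinj := hinj q.roots hcon
    have hfact := hsplit.eq_prod_roots
    have hlc : q.leadingCoeff ≠ 0 := leadingCoeff_ne_zero.mpr hq0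
    have h0 : (algebraMap F'' (Module.End F'' (F'' ⊗[F'] X'))) q.leadingCoeff *
        aeval Φ ((q.roots.map (fun a => X - C a)).prod) = 0 := by
      rw [← aeval_C (R := F'') (x := Φ), ← map_mul, ← hfact, hΦq]
    have hP0 : aeval Φ ((q.roots.map (fun a => X - C a)).prod) = 0 := by
      have := congrArg (fun z => (algebraMap F'' (Module.End F'' (F'' ⊗[F'] X'))) q.leadingCoeff⁻¹ * z) h0
      simpa [← mul_assoc, ← map_mul, inv_mul_cancel₀ hlc] using this
    obtain ⟨x, y, hxy⟩ := hnt
    exact hxy (hPinj (by rw [hP0]; rfl))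
  obtain ⟨μ, hμroot, hker⟩ := hexists
  have hcomm : ∀ (a : A) (v : F'' ⊗[F'] X'),
      Φ (LinearMap.lTensor F'' (DistribMulAction.toLinearMap F' X' a) v)
        = LinearMap.lTensor F'' (DistribMulAction.toLinearMap F' X' a) (Φ v) := by
    intro a v
    induction v using TensorProduct.induction_on with
    | zero => simp
    | tmul y x => simp [hΦtmul, hA]; exact congrArg _ (hA a x)
    | add u v hu hv => simp [map_add, hu, hv]
  have hsmulT : ∀ (a : A) (c : F'') (v : F'' ⊗[F'] X'),
      LinearMap.lTensor F'' (DistribMulAction.toLinearMap F' X' a) (c • v)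
        = c • LinearMap.lTensor F'' (DistribMulAction.toLinearMap F' X' a) v := by
    intro a c v
    induction v using TensorProduct.induction_on with
    | zero => simp
    | tmul y x => simp [TensorProduct.smul_tmul']
    | add u v hu hv => simp [smul_add, map_add, hu, hv]
  have hstab : ∀ (a : A), ∀ v ∈ LinearMap.ker (Φ - algebraMap F'' _ μ),
      LinearMap.lTensor F'' (DistribMulAction.toLinearMap F' X' a) v ∈
        LinearMap.ker (Φ - algebraMap F'' _ μ) := by
    intro a v hv
    rw [LinearMap.mem_ker, LinearMap.sub_apply, Module.algebraMap_end_apply, sub_eq_zero] at hv ⊢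
    rw [hcomm, hv, hsmulT]
  have htop : LinearMap.ker (Φ - algebraMap F'' _ μ) = ⊤ :=
    (hsimp _ hstab).resolve_left hker
  have hall : ∀ v : F'' ⊗[F'] X', Φ v = μ • v := by
    intro v
    have : v ∈ LinearMap.ker (Φ - algebraMap F'' _ μ) := htop ▸ Submodule.mem_top
    rw [LinearMap.mem_ker, LinearMap.sub_apply, Module.algebraMap_end_apply, sub_eq_zero] at this
    exact this
  have h1ne : (1 : F'') ≠ 0 := one_ne_zero
  have hli : LinearIndepOn F' id ({(1:F'')} : Set F'') :=
    LinearIndepOn.singleton h1ne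
  have h1mem : (1:F'') ∈ hli.extend (Set.subset_univ _) :=
    hli.subset_extend _ rfl
  let b := Module.Basis.extend hli
  let f : F'' →ₗ[F'] F' := b.coord ⟨1, h1mem⟩
  have hf1 : f 1 = 1 := by
    have hb1 : b ⟨1, h1mem⟩ = 1 := Module.Basis.extend_apply_self hli ⟨1, h1mem⟩
    rw [show (1:F'') = b ⟨1, h1mem⟩ from hb1.symm]
    simp [f, Module.Basis.coord_apply]
  refine ⟨f μ, fun x => ?_⟩
  have hx := hall ((1:F'') ⊗ₜ[F'] x)
  rw [hΦtmul] at hx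
  have heq : ((1:F'') ⊗ₜ[F'] φ x) = μ ⊗ₜ[F'] x := by
    rw [hx, TensorProduct.smul_tmul', smul_eq_mul, mul_one]
  have happ := congrArg (fun v => (TensorProduct.lid F' X') (LinearMap.rTensor X' f v)) heq
  simpa [hf1] using happ

section Aux
variable {F F' : Type} [Field F] [Field F'] [Algebra F F']
  {A : Type} [Ring A] [Algebra F A]
  {X' : Type} [AddCommGroup X'] [Module F X'] [Module F' X'] [Module A X']
  [IsScalarTower F F' X'] [IsScalarTower F A X'] [SMulCommClass A F' X'] [SMulCommClass F A X']

/-- Scalar multiplication by `c : F'` as an `A`-linear endomorphism. -/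
def scal (A : Type) [Ring A] {X' : Type} [AddCommGroup X'] [Module F' X'] [Module A X']
    [SMulCommClass A F' X'] (c : F') : Module.End A X' where
  toFun x := c • x
  map_add' := smul_add c
  map_smul' a x := (smul_comm a c x).symm

@[simp] lemma scal_apply (c : F') (x : X') : scal A c x = c • x := rfl

lemma scal_add (c d : F') : scal A (c + d) = (scal A c + scal A d : Module.End A X') := by
  ext x; simp [add_smul]

lemma scal_sub (c d : F') : scal A (c - d) = (scal A c - scal A d : Module.End A X') := by
  ext x; simp [sub_smul]

lemma scal_mul (c d : F') : scal A (c * d) = (scal A c * scal A d : Module.End A X') := by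
  ext x; simp [mul_smul, Module.End.mul_apply]

lemma scal_one : (scal A (1 : F') : Module.End A X') = 1 := by ext x; simp

lemma scal_smul (f : F) (c : F') : (scal A (f • c) : Module.End A X') = f • scal A c := by
  ext x; simp [smul_assoc]

lemma scal_comm (c d : F') : (scal A c * scal A d : Module.End A X') = scal A d * scal A c := by
  rw [← scal_mul, ← scal_mul, mul_comm]

lemma scal_inj [Nontrivial X'] : Function.Injective (scal A : F' → Module.End A X') := by
  intro c d h
  obtain ⟨x, hx⟩ := exists_ne (0 : X')
  have hcd := congrArg (fun (φ : Module.End A X') => φ x) h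
  simp only [scal_apply] at hcd
  have h2 : (c - d) • x = 0 := by rw [sub_smul, hcd, sub_self]
  rcases smul_eq_zero.mp h2 with h | h
  · exact sub_eq_zero.mp h
  · exact absurd h hx

lemma end_comm_F (d : Module.End A X') (f : F) (x : X') : d (f • x) = f • d x := by
  rw [← algebraMap_smul A f x, map_smul, algebraMap_smul]

/-- `scal` as an `F`-linear map. -/
def scalL (F : Type) [Field F] (F' : Type) [Field F'] [Algebra F F']
    (A : Type) [Ring A] [Algebra F A]
    (X' : Type) [AddCommGroup X'] [Module F X'] [Module F' X'] [Module A X']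
    [IsScalarTower F F' X'] [IsScalarTower F A X'] [SMulCommClass A F' X']
    [SMulCommClass F A X'] :
    F' →ₗ[F] Module.End A X' where
  toFun := scal A
  map_add' := scal_add
  map_smul' := scal_smul

@[simp] lemma scalL_apply (c : F') : scalL F F' A X' c = (scal A c : Module.End A X') := rfl

end Aux

/-- **Endomorphism algebras of irreducible restrictions along a quadratic extension.**
Let `F'/F` be a quadratic extension with nontrivial automorphism `τ`, `A` an `F`-algebra and
`X'` an absolutely irreducible `A ⊗_F F'`-module; assume endomorphism rings of simple
`A`-modules are algebraic division algebras over `F`.  If the restriction of scalars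
`Y = res_{F'/F} X'` is an irreducible `A`-module, then `End_A(Y)` is an `F`-algebra of
dimension `2` or `4` (it contains `F'`); its dimension is `4` exactly when `X'` is isomorphic
to its Galois conjugate `X̄' = X' ⊗_{F',τ} F'`, in which case `End_A(Y)` is a quaternion
division algebra over `F`, while otherwise `End_A(Y) = F'` consists of the `F'`-scalars. -/
theorem end_of_irreducible_restriction
    (F F' : Type) [Field F] [Field F'] [Algebra F F']
    (hquad : Module.finrank F F' = 2)
    (τ : F' ≃ₐ[F] F') (hτ : τ ≠ AlgEquiv.refl)
    (A : Type) [Ring A] [Algebra F A]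
    (X' : Type) [AddCommGroup X'] [Module F X'] [Module F' X'] [Module A X']
    [IsScalarTower F F' X'] [IsScalarTower F A X'] [SMulCommClass A F' X']
    [SMulCommClass F A X']
    (habs : IsAbsIrred F' A X')
    (halg : ∀ (M : Type) [AddCommGroup M] [Module F M] [Module A M],
      ∀ [IsScalarTower F A M] [SMulCommClass F A M],
      IsSimpleModule A M → ∀ φ : Module.End A M,
        (φ ≠ 0 → IsUnit φ) ∧
        ∃ p : Polynomial F, p ≠ 0 ∧ p.sum (fun n c => c • φ ^ n) = 0)
    (hirr : IsSimpleModule A X') :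
    (Module.finrank F (Module.End A X') = 2 ∨ Module.finrank F (Module.End A X') = 4) ∧
    ((Module.finrank F (Module.End A X') = 4) ↔
      ∃ j : X' ≃+ X', (∀ (c : F') (x : X'), j (c • x) = τ c • j x) ∧
        (∀ (a : A) (x : X'), j (a • x) = a • j x)) ∧
    ((Module.finrank F (Module.End A X') = 4) →
      ∀ φ : Module.End A X', φ ≠ 0 → IsUnit φ) ∧
    ((Module.finrank F (Module.End A X') = 2) →
      ∀ φ : Module.End A X', ∃ c : F', ∀ x : X', φ x = c • x) := by
  haveI : Nontrivial X' := IsSimpleModule.nontrivial A X'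
  haveI : FiniteDimensional F F' := by
    apply FiniteDimensional.of_finrank_pos
    rw [hquad]; norm_num
  obtain ⟨α, hα⟩ : ∃ α : F', τ α ≠ α := by
    by_contra h
    push_neg at h
    exact hτ (AlgEquiv.ext h)
  have hτsmul : ∀ (f : F) (x : F'), τ (f • x) = f • τ x := fun f x => by
    rw [Algebra.smul_def, map_mul, AlgEquiv.commutes, ← Algebra.smul_def]
  have hli : LinearIndependent F ![α, (1:F')] := by
    rw [linearIndependent_fin2]
    refine ⟨one_ne_zero, fun f hf => ?_⟩
    simp only [Matrix.cons_val_one, Matrix.head_cons, Matrix.cons_val_zero] at hf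
    apply hα
    rw [← hf, hτsmul, map_one]
  let b : Module.Basis (Fin 2) F F' := basisOfLinearIndependentOfCardEqFinrank hli (by simp [hquad])
  have hb0 : b 0 = α := by
    rw [show ⇑b = ![α, (1:F')] from coe_basisOfLinearIndependentOfCardEqFinrank hli _]; rfl
  have hb1 : b 1 = 1 := by
    rw [show ⇑b = ![α, (1:F')] from coe_basisOfLinearIndependentOfCardEqFinrank hli _]; rfl
  have hrep : ∀ c : F', c = (b.repr c 1) • (1:F') + (b.repr c 0) • α := by
    intro c
    conv_lhs => rw [← b.sum_repr c]
    rw [Fin.sum_univ_two, hb0, hb1, add_comm]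
  set β := τ α with hβdef
  have hαβ : α ≠ β := fun h => hα h.symm
  have hτc : ∀ c : F', τ c = (b.repr c 1) • (1:F') + (b.repr c 0) • β := by
    intro c
    conv_lhs => rw [hrep c]
    rw [map_add, hτsmul, hτsmul, show τ (1:F') = 1 from map_one τ]
  obtain ⟨pc, qc, hsq⟩ : ∃ pc qc : F, α * α = pc • (1:F') + qc • α := ⟨_, _, hrep (α*α)⟩
  have hβsq : β * β = pc • (1:F') + qc • β := by
    calc β * β = τ (α * α) := (map_mul τ α α).symm
      _ = pc • (1:F') + qc • β := by rw [hsq, map_add, hτsmul, hτsmul, show τ (1:F') = 1 from map_one τ]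
  have hfieldsum : α + β = qc • (1:F') := by
    have e1 : α * α = algebraMap F F' pc + algebraMap F F' qc * α := by
      rw [hsq, Algebra.smul_def, Algebra.smul_def, mul_one]
    have e2 : β * β = algebraMap F F' pc + algebraMap F F' qc * β := by
      rw [hβsq, Algebra.smul_def, Algebra.smul_def, mul_one]
    have h1 : (α - β) * (α + β - qc • (1:F')) = 0 := by
      rw [Algebra.smul_def, mul_one]
      linear_combination e1 - e2
    rcases mul_eq_zero.mp h1 with h | h
    · exact absurd (sub_eq_zero.mp h) hαβ
    · exact sub_eq_zero.mp h
  have hfieldprod : α * β = (-pc) • (1:F') := by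
    have e1 : α * α = algebraMap F F' pc + algebraMap F F' qc * α := by
      rw [hsq, Algebra.smul_def, Algebra.smul_def, mul_one]
    have hb' : β = qc • (1:F') - α := eq_sub_of_add_eq' hfieldsum
    rw [hb', Algebra.smul_def, Algebra.smul_def, mul_one, mul_one, map_neg]
    linear_combination -e1
  -- endomorphism algebra identities
  have hss : scal A α * scal A α = pc • (1 : Module.End A X') + qc • scal A α := by
    rw [← scal_mul, hsq, scal_add, scal_smul, scal_smul, scal_one]
  have hsumE : scal A α + scal A β = qc • (1 : Module.End A X') := by
    rw [← scal_add, hfieldsum, scal_smul, scal_one]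
  have hprodαβ : scal A α * scal A β = (-pc) • (1 : Module.End A X') := by
    rw [← scal_mul, hfieldprod, scal_smul, scal_one]
  have hprodβα : scal A β * scal A α = (-pc) • (1 : Module.End A X') := by
    rw [← scal_mul, mul_comm β α, hfieldprod, scal_smul, scal_one]
  -- the two "eigenspaces"
  let Esub : F' → Submodule F (Module.End A X') := fun γ =>
    { carrier := {d | d * scal A α = scal A γ * d}
      add_mem' := fun {d e} hd he => by
        simp only [Set.mem_setOf_eq] at hd he ⊢
        rw [add_mul, mul_add, hd, he]
      zero_mem' := by simp only [Set.mem_setOf_eq, zero_mul, mul_zero]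
      smul_mem' := fun f d hd => by
        simp only [Set.mem_setOf_eq] at hd ⊢
        rw [smul_mul_assoc, mul_smul_comm, hd] }
  have hmem : ∀ (γ : F') (d : Module.End A X'), d ∈ Esub γ ↔ d * scal A α = scal A γ * d :=
    fun _ _ => Iff.rfl
  -- (1) elements of Esub α are F'-linear
  have hEαscal : ∀ d : Module.End A X', d ∈ Esub α → ∀ (c : F') (x : X'), d (c • x) = c • d x := by
    intro d hd c x
    rw [hmem] at hd
    have hde : d (α • x) = α • d x := by
      have h := congrArg (fun φ : Module.End A X' => φ x) hd
      simpa [Module.End.mul_apply] using h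
    have expand : ∀ y : X', c • y = (b.repr c 1) • y + (b.repr c 0) • (α • y) := by
      intro y
      conv_lhs => rw [hrep c]
      rw [add_smul, smul_assoc, smul_assoc, one_smul]
    rw [expand, map_add, end_comm_F, end_comm_F, hde, expand]
  -- (2) elements of Esub β intertwine via τ
  have hEβcomm : ∀ d : Module.End A X', d ∈ Esub β →
      ∀ c : F', d * scal A c = scal A (τ c) * d := by
    intro d hd c
    rw [hmem] at hd
    conv_lhs => rw [hrep c]
    conv_rhs => rw [hτc c]
    rw [scal_add, scal_add, scal_smul, scal_smul, scal_smul, scal_one,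
      mul_add, add_mul, mul_smul_comm, mul_smul_comm, smul_mul_assoc, smul_mul_assoc,
      mul_one, one_mul, hd]
  -- (3) elements of Esub α are scalars
  have hEαscalar : ∀ d : Module.End A X', d ∈ Esub α → ∃ c : F', d = scal A c := by
    intro d hd
    let dL : X' →ₗ[F'] X' :=
      { toFun := d, map_add' := d.map_add, map_smul' := fun c x => hEαscal d hd c x }
    have hA' : ∀ (a : A) (x : X'), dL (a • x) = a • dL x := fun a x => d.map_smul a x
    obtain ⟨-, p, hp0, hps⟩ := halg X' hirr d
    have hp0' : p.map (algebraMap F F') ≠ 0 := Polynomial.map_ne_zero hp0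
    have haeval : Polynomial.aeval dL (p.map (algebraMap F F')) = 0 := by
      rw [Polynomial.sum_over_range (f := fun n c => c • d ^ n) p (fun n => zero_smul F _)] at hps
      have hdeg : (p.map (algebraMap F F')).natDegree < p.natDegree + 1 :=
        lt_of_le_of_lt Polynomial.natDegree_map_le (Nat.lt_succ_self _)
      rw [Polynomial.aeval_eq_sum_range' hdeg]
      ext x
      have hx := congrArg (fun φ : Module.End A X' => φ x) hps
      simp only [LinearMap.sum_apply, LinearMap.smul_apply, Module.End.pow_apply,
        LinearMap.zero_apply] at hx
      simp only [LinearMap.sum_apply, LinearMap.smul_apply, Polynomial.coeff_map,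
        algebraMap_smul, Module.End.pow_apply, LinearMap.zero_apply]
      exact hx
    obtain ⟨c, hc⟩ := key_scalar F' A X' habs dL hA' _ hp0' haeval
    exact ⟨c, by ext x; exact hc x⟩
  -- (4) Esub α is the range of scalL
  have hEαrange : Esub α = LinearMap.range (scalL F F' A X') := by
    apply le_antisymm
    · intro d hd
      obtain ⟨c, hc⟩ := hEαscalar d hd
      exact ⟨c, hc.symm⟩
    · rintro _ ⟨c, rfl⟩
      rw [scalL_apply, hmem]
      exact scal_comm c α
  have hscalL_inj : Function.Injective (scalL F F' A X') := fun c d h => scal_inj h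
  have hfinEα : Module.finrank F (Esub α) = 2 := by
    rw [hEαrange, LinearMap.finrank_range_of_inj hscalL_inj, hquad]
  haveI hFDα : FiniteDimensional F (Esub α) := by
    rw [hEαrange]; infer_instance
  -- (5) trivial intersection
  have hinf : Esub α ⊓ Esub β = ⊥ := by
    rw [eq_bot_iff]
    intro d hd
    obtain ⟨hdα, hdβ⟩ := Submodule.mem_inf.mp hd
    rw [hmem] at hdα hdβ
    rw [Submodule.mem_bot]
    have h1 : scal A (α - β) * d = 0 := by
      rw [scal_sub, sub_mul, ← hdα, ← hdβ, sub_self]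
    have h2 : d = scal A (α - β)⁻¹ * (scal A (α - β) * d) := by
      rw [← mul_assoc, ← scal_mul, inv_mul_cancel₀ (sub_ne_zero.mpr hαβ), scal_one, one_mul]
    rw [h1, mul_zero] at h2
    exact h2
  -- (6) the sum is everything
  have hsup : Esub α ⊔ Esub β = ⊤ := by
    rw [eq_top_iff]
    intro d _
    have h1 : d * scal A α * scal A α = pc • d + qc • (d * scal A α) := by
      rw [mul_assoc, hss, mul_add, mul_smul_comm, mul_one, mul_smul_comm]
    have h2 : scal A α * (scal A β * d) = (-pc) • d := by
      rw [← mul_assoc, hprodαβ, smul_mul_assoc, one_mul]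
    have h2' : scal A β * (scal A α * d) = (-pc) • d := by
      rw [← mul_assoc, hprodβα, smul_mul_assoc, one_mul]
    have h3 : scal A β * (d * scal A α) + scal A α * (d * scal A α)
        = qc • (d * scal A α) := by
      rw [← add_mul, add_comm, hsumE, smul_mul_assoc, one_mul]
    have h4 : scal A α * (d * scal A α)
        = qc • (d * scal A α) - scal A β * (d * scal A α) := eq_sub_of_add_eq' h3
    have hu1 : d * scal A α - scal A β * d ∈ Esub α := by
      rw [hmem, sub_mul, mul_sub, h1, mul_assoc (scal A β) d (scal A α), h4, h2]
      rw [neg_smul]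
      abel
    have hu2 : d * scal A α - scal A α * d ∈ Esub β := by
      rw [hmem, sub_mul, mul_sub, h1, mul_assoc (scal A α) d (scal A α), h4, h2']
      rw [neg_smul]
      abel
    have hl : ∀ (γ c : F') (e : Module.End A X'), e ∈ Esub γ → scal A c * e ∈ Esub γ := by
      intro γ c e he
      rw [hmem] at he ⊢
      rw [mul_assoc, he, ← mul_assoc, scal_comm, mul_assoc]
    have hdec : d = scal A (α - β)⁻¹ * (d * scal A α - scal A β * d)
        - scal A (α - β)⁻¹ * (d * scal A α - scal A α * d) := by
      rw [← mul_sub]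
      have hsub : (d * scal A α - scal A β * d) - (d * scal A α - scal A α * d)
          = scal A (α - β) * d := by
        rw [scal_sub, sub_mul]; abel
      rw [hsub, ← mul_assoc, ← scal_mul, inv_mul_cancel₀ (sub_ne_zero.mpr hαβ), scal_one, one_mul]
    rw [hdec]
    exact Submodule.sub_mem _ (Submodule.mem_sup_left (hl α _ _ hu1))
      (Submodule.mem_sup_right (hl β _ _ hu2))
  -- (7) dimension of Esub β if nonzero
  have hEβdim : Esub β ≠ ⊥ →
      Module.finrank F (Esub β) = 2 ∧ FiniteDimensional F (Esub β) := by
    intro hne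
    obtain ⟨u, huβ, hune⟩ := (Submodule.ne_bot_iff _).mp hne
    obtain ⟨U, hU⟩ := (halg X' hirr u).1 hune
    have hv1 : u * (↑U⁻¹ : Module.End A X') = 1 := by rw [← hU]; exact U.mul_inv
    have hv2 : (↑U⁻¹ : Module.End A X') * u = 1 := by rw [← hU]; exact U.inv_mul
    set v : Module.End A X' := ↑U⁻¹ with hvdef
    let ψ : F' →ₗ[F] Module.End A X' := (LinearMap.mulLeft F u).comp (scalL F F' A X')
    have hψapp : ∀ c : F', ψ c = u * scal A c := fun c => rfl
    have hψinj : Function.Injective ψ := by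
      intro c c' h
      apply scal_inj (A := A) (X' := X')
      have h' : v * (u * scal A c) = v * (u * scal A c') := by
        rw [← hψapp, ← hψapp, h]
      rwa [← mul_assoc, ← mul_assoc, hv2, one_mul, one_mul] at h'
    have hvβ : v * scal A β = scal A α * v := by
      have h := (hmem β u).mp huβ
      calc v * scal A β = v * scal A β * (u * v) := by rw [hv1, mul_one]
        _ = v * (scal A β * u) * v := by simp only [mul_assoc]
        _ = v * (u * scal A α) * v := by rw [← h]
        _ = scal A α * v := by
            simp only [← mul_assoc]
            rw [hv2, one_mul]
    have hψrange : LinearMap.range ψ = Esub β := by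
      apply le_antisymm
      · rintro _ ⟨c, rfl⟩
        rw [hψapp, hmem, mul_assoc, scal_comm c α, ← mul_assoc, (hmem β u).mp huβ, mul_assoc]
      · intro dd hdd
        have hvdmem : v * dd ∈ Esub α := by
          rw [hmem]
          have hdd' := (hmem β dd).mp hdd
          rw [mul_assoc, hdd', ← mul_assoc, hvβ, mul_assoc]
        obtain ⟨c, hc⟩ := hEαscalar _ hvdmem
        refine ⟨c, ?_⟩
        rw [hψapp, ← hc, ← mul_assoc, hv1, one_mul]
    constructor
    · rw [← hψrange, LinearMap.finrank_range_of_inj hψinj, hquad]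
    · rw [← hψrange]; infer_instance
  -- building j from a nonzero element of Esub β
  have htoj : Esub β ≠ ⊥ → (∃ j : X' ≃+ X', (∀ (c : F') (x : X'), j (c • x) = τ c • j x) ∧
      (∀ (a : A) (x : X'), j (a • x) = a • j x)) := by
    intro hne
    obtain ⟨u, huβ, hune⟩ := (Submodule.ne_bot_iff _).mp hne
    obtain ⟨U, hU⟩ := (halg X' hirr u).1 hune
    have hv1 : u * (↑U⁻¹ : Module.End A X') = 1 := by rw [← hU]; exact U.mul_inv
    have hv2 : (↑U⁻¹ : Module.End A X') * u = 1 := by rw [← hU]; exact U.inv_mul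
    refine ⟨{ toFun := u, invFun := (↑U⁻¹ : Module.End A X'),
              left_inv := fun x => by
                have h := congrArg (fun φ : Module.End A X' => φ x) hv2
                simpa [Module.End.mul_apply] using h,
              right_inv := fun x => by
                have h := congrArg (fun φ : Module.End A X' => φ x) hv1
                simpa [Module.End.mul_apply] using h,
              map_add' := u.map_add }, ?_, fun a x => u.map_smul a x⟩
    intro c x
    have h := hEβcomm u huβ c
    have h' := congrArg (fun φ : Module.End A X' => φ x) h
    simpa [Module.End.mul_apply] using h'
  -- from j to a nonzero element of Esub β
  have hjto : (∃ j : X' ≃+ X', (∀ (c : F') (x : X'), j (c • x) = τ c • j x) ∧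
      (∀ (a : A) (x : X'), j (a • x) = a • j x)) → Esub β ≠ ⊥ := by
    rintro ⟨j, hj1, hj2⟩
    let uj : Module.End A X' :=
      { toFun := j, map_add' := j.map_add, map_smul' := fun a x => hj2 a x }
    have hujmem : uj ∈ Esub β := by
      rw [hmem]
      ext x
      simp only [Module.End.mul_apply, scal_apply]
      exact hj1 α x
    have hujne : uj ≠ 0 := by
      obtain ⟨x0, hx0⟩ := exists_ne (0 : X')
      intro h0
      have h1 : j (j.symm x0) = 0 := congrArg (fun φ : Module.End A X' => φ (j.symm x0)) h0
      rw [j.apply_symm_apply] at h1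
      exact hx0 h1
    exact (Submodule.ne_bot_iff _).mpr ⟨uj, hujmem, hujne⟩
  by_cases hbot : Esub β = ⊥
  · have hdim : Module.finrank F (Module.End A X') = 2 := by
      have htop2 : (⊤ : Submodule F (Module.End A X')) = Esub α := by
        rw [← hsup, hbot, sup_bot_eq]
      rw [← finrank_top F (Module.End A X'), htop2, hfinEα]
    refine ⟨Or.inl hdim, ?_, fun _ φ hφ => (halg X' hirr φ).1 hφ, ?_⟩
    · rw [hdim]
      constructor
      · intro h24; exact absurd h24 (by norm_num)
      · intro hj; exact absurd hbot (hjto hj)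
    · intro _ φ
      have hφα : φ ∈ Esub α := by
        have hφtop : φ ∈ (⊤ : Submodule F (Module.End A X')) := Submodule.mem_top
        rw [← hsup, hbot, sup_bot_eq] at hφtop
        exact hφtop
      obtain ⟨c, hc⟩ := hEαscalar φ hφα
      exact ⟨c, fun x => by rw [hc]; rfl⟩
  · obtain ⟨hfinEβ, hFDβ⟩ := hEβdim hbot
    haveI := hFDβ
    have hdim : Module.finrank F (Module.End A X') = 4 := by
      have h := Submodule.finrank_sup_add_finrank_inf_eq (Esub α) (Esub β)
      rw [hsup, hinf, finrank_top, finrank_bot, hfinEα, hfinEβ] at h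
      omega
    exact ⟨Or.inr hdim, by rw [hdim]; exact ⟨fun _ => htoj hbot, fun _ => rfl⟩,
      fun _ φ hφ => (halg X' hirr φ).1 hφ,
      fun h2 => absurd (hdim.symm.trans h2) (by norm_num)⟩
end
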